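/- Let F ⊆ P([n]) be an increasing family, 0 < p < 1, and let μ_p be the p-biased measure. If k ≤ n and p ≥ (k + sqrt(2n log(1/δ)))/n for some δ > 0, then μ_p(F) ≥ (1 − δ) · |F^{(k)}| / binom(n,k). -/

import Mathlib

open Finset

noncomputable def biasedMeasure (p : ℝ) (n : ℕ) (F : Finset (Finset (Fin n))) : ℝ :=
  ∑ A ∈ F, p ^ A.card * (1 - p) ^ (n - A.card)

lemma exp_neg_le_quad {x : ℝ} (hx : 0 ≤ x) : Real.exp (-x) ≤ 1 - x + x ^ 2 / 2 := by
  have key : MonotoneOn (fun y : ℝ => 1 - y + y ^ 2 / 2 - Real.exp (-y)) (Set.Ici 0) := by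
    apply monotoneOn_of_deriv_nonneg (convex_Ici 0)
    · fun_prop
    · fun_prop
    · intro y hy
      rw [interior_Ici] at hy
      have hd : HasDerivAt (fun y : ℝ => 1 - y + y ^ 2 / 2 - Real.exp (-y))
          (-1 + y + Real.exp (-y)) y := by
        have h1 : HasDerivAt (fun y : ℝ => Real.exp (-y)) (-Real.exp (-y)) y := by
          exact ((Real.hasDerivAt_exp (-y)).comp y (hasDerivAt_neg y)).congr_deriv (by ring)
        have h2 : HasDerivAt (fun y : ℝ => 1 - y + y ^ 2 / 2) (-1 + y) y := by
          have := ((hasDerivAt_id y).const_sub 1).add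
            (((hasDerivAt_pow 2 y)).div_const 2)
          exact this.congr_deriv (by norm_num)
        exact (h2.sub h1).congr_deriv (by ring)
      rw [hd.deriv]
      have := Real.add_one_le_exp (-y)
      linarith
  have h0 := key (Set.self_mem_Ici) (Set.mem_Ici.2 hx) hx
  simp at h0
  linarith

lemma chernoff (n k : ℕ) (p t : ℝ) (hn : 0 < n) (hp0 : 0 ≤ p) (hp1 : p ≤ 1)
    (ht : 0 ≤ t) (hkt : (k : ℝ) + t ≤ n * p) :
    ∑ j ∈ range k, (n.choose j : ℝ) * p ^ j * (1 - p) ^ (n - j)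
      ≤ Real.exp (-(t ^ 2) / (2 * n)) := by
  have hn' : (0 : ℝ) < n := by exact_mod_cast hn
  set l : ℝ := t / n with hl
  have hl0 : 0 ≤ l := div_nonneg ht hn'.le
  have hq0 : 0 ≤ 1 - p := by linarith
  have hkn : (k : ℝ) ≤ n := by nlinarith
  have hknn : k ≤ n := by exact_mod_cast hkn
  set r : ℝ := p * Real.exp (-l) with hr
  have hr0 : 0 ≤ r := mul_nonneg hp0 (Real.exp_pos _).le
  -- step 1: termwise
  have step1 : ∑ j ∈ range k, (n.choose j : ℝ) * p ^ j * (1 - p) ^ (n - j)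
      ≤ Real.exp (l * k) * ∑ j ∈ range k, (n.choose j : ℝ) * r ^ j * (1 - p) ^ (n - j) := by
    rw [Finset.mul_sum]
    apply Finset.sum_le_sum
    intro j hj
    have hjk : (j : ℝ) ≤ k := by exact_mod_cast (Finset.mem_range.1 hj).le
    have h1 : (1 : ℝ) ≤ Real.exp (l * ((k : ℝ) - j)) := by
      rw [Real.one_le_exp_iff]
      exact mul_nonneg hl0 (by linarith)
    calc (n.choose j : ℝ) * p ^ j * (1 - p) ^ (n - j)
        ≤ ((n.choose j : ℝ) * p ^ j * (1 - p) ^ (n - j)) * Real.exp (l * ((k : ℝ) - j)) := by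
          nlinarith [mul_nonneg (mul_nonneg (Nat.cast_nonneg (n.choose j)) (pow_nonneg hp0 j)) (pow_nonneg hq0 (n - j)), Real.exp_pos (l * ((k : ℝ) - j))]
      _ = Real.exp (l * k) * ((n.choose j : ℝ) * r ^ j * (1 - p) ^ (n - j)) := by
          rw [hr, mul_pow, ← Real.exp_nat_mul,
            show l * ((k : ℝ) - j) = l * k + (j : ℝ) * -l by ring, Real.exp_add]
          ring
  -- step 2: extend sum
  have step2 : ∑ j ∈ range k, (n.choose j : ℝ) * r ^ j * (1 - p) ^ (n - j)
      ≤ ∑ j ∈ range (n + 1), (n.choose j : ℝ) * r ^ j * (1 - p) ^ (n - j) := by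
    apply Finset.sum_le_sum_of_subset_of_nonneg
    · exact Finset.range_subset_range.2 (by omega)
    · intro j _ _
      positivity
  -- step 3: binomial theorem
  have step3 : ∑ j ∈ range (n + 1), (n.choose j : ℝ) * r ^ j * (1 - p) ^ (n - j)
      = (r + (1 - p)) ^ n := by
    rw [add_pow]
    exact Finset.sum_congr rfl fun j _ => by ring
  -- step 4
  have step4 : (r + (1 - p)) ^ n ≤ Real.exp (n * (p * (Real.exp (-l) - 1))) := by
    have hb : r + (1 - p) ≤ Real.exp (p * (Real.exp (-l) - 1)) := by
      have := Real.add_one_le_exp (p * (Real.exp (-l) - 1))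
      nlinarith
    calc (r + (1 - p)) ^ n ≤ Real.exp (p * (Real.exp (-l) - 1)) ^ n :=
          pow_le_pow_left₀ (by positivity) hb n
      _ = Real.exp (n * (p * (Real.exp (-l) - 1))) := (Real.exp_nat_mul _ n).symm
  -- exponent arithmetic
  have expineq : l * k + n * (p * (Real.exp (-l) - 1)) ≤ -(t ^ 2) / (2 * n) := by
    have hquad := exp_neg_le_quad hl0
    have hple : Real.exp (-l) - 1 ≤ -l + l ^ 2 / 2 := by linarith
    have h1 : p * (Real.exp (-l) - 1) ≤ p * (-l + l ^ 2 / 2) := by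
      apply mul_le_mul_of_nonneg_left hple hp0
    have h2 : n * (p * (Real.exp (-l) - 1)) ≤ n * (p * (-l + l ^ 2 / 2)) := by
      apply mul_le_mul_of_nonneg_left h1 hn'.le
    have hlt : l * n = t := by rw [hl]; field_simp
    -- l*k + n*p*(-l + l^2/2) ≤ l*k - n*p*l + n*l^2/2 ≤ -l*t + n*l^2/2 = -t^2/(2n)
    have h3 : l * k + n * (p * (-l + l ^ 2 / 2)) ≤ -(l * t) + n * l ^ 2 / 2 := by
      have hnp : (k : ℝ) + t ≤ n * p := hkt
      nlinarith [mul_nonneg (by linarith : (0:ℝ) ≤ (n:ℝ) * p - ((k:ℝ) + t)) hl0,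
        mul_nonneg (mul_nonneg (by linarith : (0:ℝ) ≤ 1 - p) hn'.le) (sq_nonneg l)]
    have h4 : -(l * t) + n * l ^ 2 / 2 = -(t ^ 2) / (2 * n) := by
      rw [hl]; field_simp; ring
    linarith
  calc ∑ j ∈ range k, (n.choose j : ℝ) * p ^ j * (1 - p) ^ (n - j)
      ≤ Real.exp (l * k) * ∑ j ∈ range k, (n.choose j : ℝ) * r ^ j * (1 - p) ^ (n - j) := step1
    _ ≤ Real.exp (l * k) * ((r + (1 - p)) ^ n) := by
        rw [← step3]
        exact mul_le_mul_of_nonneg_left step2 (Real.exp_pos _).le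
    _ ≤ Real.exp (l * k) * Real.exp (n * (p * (Real.exp (-l) - 1))) :=
        mul_le_mul_of_nonneg_left step4 (Real.exp_pos _).le
    _ = Real.exp (l * k + n * (p * (Real.exp (-l) - 1))) := (Real.exp_add _ _).symm
    _ ≤ Real.exp (-(t ^ 2) / (2 * n)) := Real.exp_le_exp.2 expineq

lemma counting (n k : ℕ) (p : ℝ) (hp0 : 0 ≤ p) (hp1 : p ≤ 1) (hk : k ≤ n)
    (F : Finset (Finset (Fin n)))
    (hinc : ∀ A B : Finset (Fin n), B ∈ F → B ⊆ A → A ∈ F) :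
    (∑ j ∈ Ico k (n + 1), (n.choose j : ℝ) * p ^ j * (1 - p) ^ (n - j)) *
      (((F.filter (fun A => A.card = k)).card : ℝ) / (n.choose k)) ≤ biasedMeasure p n F := by
  have hq0 : (0:ℝ) ≤ 1 - p := by linarith
  set Fk := F.filter (fun A => A.card = k) with hFk
  set w : Finset (Fin n) → ℝ := fun A => p ^ A.card * (1 - p) ^ (n - A.card) with hw
  have hw0 : ∀ A, 0 ≤ w A := fun A => mul_nonneg (pow_nonneg hp0 _) (pow_nonneg hq0 _)
  set S : ℝ := ∑ B ∈ Fk, ∑ A ∈ (univ : Finset (Fin n)).powerset,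
      (if B ⊆ A then w A / ((A.card.choose k : ℝ)) else 0) with hS
  -- Part (i): S ≤ biasedMeasure
  have part1 : S ≤ biasedMeasure p n F := by
    rw [hS, Finset.sum_comm]
    have hle : ∀ A ∈ (univ : Finset (Fin n)).powerset,
        (∑ B ∈ Fk, if B ⊆ A then w A / ((A.card.choose k : ℝ)) else 0)
          ≤ if A ∈ F then w A else 0 := by
      intro A _
      rw [← Finset.sum_filter, Finset.sum_const, nsmul_eq_mul]
      by_cases hc : (Fk.filter (fun B => B ⊆ A)).card = 0
      · rw [hc]
        simp only [Nat.cast_zero, zero_mul]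
        split
        · exact hw0 A
        · exact le_rfl
      · obtain ⟨B, hB⟩ := Finset.card_ne_zero.1 hc
        rw [Finset.mem_filter] at hB
        obtain ⟨hBFk, hBA⟩ := hB
        rw [hFk, Finset.mem_filter] at hBFk
        obtain ⟨hBF, hBk⟩ := hBFk
        have hAF : A ∈ F := hinc A B hBF hBA
        rw [if_pos hAF]
        have hkA : k ≤ A.card := hBk ▸ Finset.card_le_card hBA
        have hcpos : 0 < A.card.choose k := Nat.choose_pos hkA
        have hsub : Fk.filter (fun B => B ⊆ A) ⊆ Finset.powersetCard k A := by
          intro B hB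
          rw [Finset.mem_filter, hFk, Finset.mem_filter] at hB
          rw [Finset.mem_powersetCard]
          exact ⟨hB.2, hB.1.2⟩
        have hcard : ((Fk.filter (fun B => B ⊆ A)).card : ℝ) ≤ (A.card.choose k : ℝ) := by
          exact_mod_cast (Finset.card_le_card hsub).trans_eq (Finset.card_powersetCard k A)
        calc ((Fk.filter (fun B => B ⊆ A)).card : ℝ) * (w A / (A.card.choose k : ℝ))
            ≤ (A.card.choose k : ℝ) * (w A / (A.card.choose k : ℝ)) :=
              mul_le_mul_of_nonneg_right hcard (by positivity)
          _ = w A := by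
              rw [mul_div_cancel₀]
              exact_mod_cast hcpos.ne'
    calc (∑ A ∈ (univ : Finset (Fin n)).powerset, ∑ B ∈ Fk,
            if B ⊆ A then w A / ((A.card.choose k : ℝ)) else 0)
        ≤ ∑ A ∈ (univ : Finset (Fin n)).powerset, if A ∈ F then w A else 0 :=
          Finset.sum_le_sum hle
      _ = ∑ A ∈ (univ : Finset (Fin n)).powerset.filter (· ∈ F), w A := by
          rw [Finset.sum_filter]
      _ = ∑ A ∈ F, w A := by
          congr 1
          ext A
          simp
      _ = biasedMeasure p n F := rfl
  -- Part (ii): S equals the explicit formula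
  have part2 : S = (Fk.card : ℝ) *
      ∑ j ∈ Ico k (n + 1), (n.choose j : ℝ) * p ^ j * (1 - p) ^ (n - j) / (n.choose k : ℝ) := by
    rw [hS]
    rw [Finset.sum_congr rfl (g := fun _ => ∑ j ∈ Ico k (n + 1),
        (n.choose j : ℝ) * p ^ j * (1 - p) ^ (n - j) / (n.choose k : ℝ))
      (fun B hB => ?_), Finset.sum_const, nsmul_eq_mul]
    rw [hFk, Finset.mem_filter] at hB
    obtain ⟨hBF, hBk⟩ := hB
    calc ∑ A ∈ (univ : Finset (Fin n)).powerset,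
            (if B ⊆ A then w A / ((A.card.choose k : ℝ)) else 0)
        = ∑ A ∈ (univ : Finset (Fin n)).powerset.filter (fun A => B ⊆ A),
            w A / ((A.card.choose k : ℝ)) := (Finset.sum_filter _ _).symm
      _ = ∑ C ∈ ((univ : Finset (Fin n)) \ B).powerset,
            w (B ∪ C) / (((B ∪ C).card.choose k : ℝ)) := by
          refine Finset.sum_nbij' (fun A => A \ B) (fun C => B ∪ C) ?_ ?_ ?_ ?_ ?_
          · intro A hA
            rw [Finset.mem_powerset]
            exact Finset.sdiff_subset_sdiff (Finset.subset_univ A) le_rfl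
          · intro C _
            rw [Finset.mem_filter, Finset.mem_powerset]
            exact ⟨Finset.subset_univ _, Finset.subset_union_left⟩
          · intro A hA
            rw [Finset.mem_filter] at hA
            exact Finset.union_sdiff_of_subset hA.2
          · intro C hC
            rw [Finset.mem_powerset] at hC
            refine Finset.union_sdiff_cancel_left ?_
            refine Finset.disjoint_left.2 fun x hxB hxC => ?_
            have := hC hxC
            rw [Finset.mem_sdiff] at this
            exact this.2 hxB
          · intro A hA
            rw [Finset.mem_filter] at hA
            rw [Finset.union_sdiff_of_subset hA.2]
      _ = ∑ i ∈ Finset.range (n - k + 1), ∑ C ∈ Finset.powersetCard i ((univ : Finset (Fin n)) \ B),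
            w (B ∪ C) / (((B ∪ C).card.choose k : ℝ)) := by
          have hcards : ((univ : Finset (Fin n)) \ B).card = n - k := by
            rw [Finset.card_sdiff_of_subset (Finset.subset_univ B), Finset.card_univ, Fintype.card_fin, hBk]
          rw [Finset.sum_powerset, hcards]
      _ = ∑ i ∈ Finset.range (n - k + 1),
            ((n - k).choose i : ℝ) * (p ^ (k + i) * (1 - p) ^ (n - (k + i)) / (((k + i).choose k : ℝ))) := by
          refine Finset.sum_congr rfl fun i _ => ?_
          have hcards : ((univ : Finset (Fin n)) \ B).card = n - k := by
            rw [Finset.card_sdiff_of_subset (Finset.subset_univ B), Finset.card_univ, Fintype.card_fin, hBk]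
          have hconst : ∀ C ∈ Finset.powersetCard i ((univ : Finset (Fin n)) \ B),
              w (B ∪ C) / (((B ∪ C).card.choose k : ℝ))
                = p ^ (k + i) * (1 - p) ^ (n - (k + i)) / (((k + i).choose k : ℝ)) := by
            intro C hC
            rw [Finset.mem_powersetCard] at hC
            obtain ⟨hCsub, hCcard⟩ := hC
            have hdisj : Disjoint B C := by
              refine Finset.disjoint_left.2 fun x hxB hxC => ?_
              have := hCsub hxC
              rw [Finset.mem_sdiff] at this
              exact this.2 hxB
            have hcardu : (B ∪ C).card = k + i := by
              rw [Finset.card_union_of_disjoint hdisj, hBk, hCcard]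
            rw [hw]
            simp only [hcardu]
          rw [Finset.sum_congr rfl hconst, Finset.sum_const, Finset.card_powersetCard, hcards,
            nsmul_eq_mul]
      _ = ∑ j ∈ Ico k (n + 1), (n.choose j : ℝ) * p ^ j * (1 - p) ^ (n - j) / (n.choose k : ℝ) := by
          rw [Finset.sum_Ico_eq_sum_range]
          have hrange : n + 1 - k = n - k + 1 := by omega
          rw [hrange]
          refine Finset.sum_congr rfl fun i hi => ?_
          rw [Finset.mem_range] at hi
          have hki : k + i ≤ n := by omega
          have hid := Nat.choose_mul (n := n) (k := k + i) (s := k) (Nat.le_add_right k i)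
          rw [Nat.add_sub_cancel_left] at hid
          have h1 : (0:ℝ) < ((k + i).choose k : ℝ) := by
            exact_mod_cast Nat.choose_pos (Nat.le_add_right k i)
          have h2 : (0:ℝ) < (n.choose k : ℝ) := by exact_mod_cast Nat.choose_pos hk
          have hidR : (n.choose (k + i) : ℝ) * ((k + i).choose k : ℝ)
              = (n.choose k : ℝ) * ((n - k).choose i : ℝ) := by exact_mod_cast congrArg Nat.cast hid
          field_simp
          linear_combination (-(p ^ (k + i) * (1 - p) ^ (n - (k + i)))) * hidR
  -- Assemble
  have h2 : (0:ℝ) < (n.choose k : ℝ) := by exact_mod_cast Nat.choose_pos hk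
  calc (∑ j ∈ Ico k (n + 1), (n.choose j : ℝ) * p ^ j * (1 - p) ^ (n - j)) *
        ((Fk.card : ℝ) / (n.choose k : ℝ))
      = (Fk.card : ℝ) * ∑ j ∈ Ico k (n + 1),
          (n.choose j : ℝ) * p ^ j * (1 - p) ^ (n - j) / (n.choose k : ℝ) := by
        rw [Finset.mul_sum, Finset.sum_mul]
        exact Finset.sum_congr rfl fun j _ => by ring
    _ = S := part2.symm
    _ ≤ biasedMeasure p n F := part1

/-- For an increasing family F and p ≥ (k + sqrt(2 n log(1/δ)))/n,
μ_p(F) ≥ (1 − δ)·|F^{(k)}|/binom(n,k). -/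
theorem monotone_approx (n k : ℕ) (δ p : ℝ) (hδ : 0 < δ) (hk : k ≤ n)
    (hp : ((k : ℝ) + Real.sqrt (2 * n * Real.log (1 / δ))) / n ≤ p) (hp1 : p ≤ 1)
    (F : Finset (Finset (Fin n)))
    (hinc : ∀ A B : Finset (Fin n), B ∈ F → B ⊆ A → A ∈ F) :
    (1 - δ) * (((F.filter (fun A => A.card = k)).card : ℝ) / (n.choose k)) ≤
      biasedMeasure p n F := by
  rcases Nat.eq_zero_or_pos n with hn | hn
  · -- n = 0
    subst hn
    interval_cases k
    have hA : ∀ A : Finset (Fin 0), A.card = 0 := fun A => by simp [Finset.eq_empty_of_isEmpty A]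
    have hμ : biasedMeasure p 0 F = (F.card : ℝ) := by
      rw [biasedMeasure]
      rw [Finset.sum_congr rfl (g := fun _ => (1:ℝ)) (fun A _ => by rw [hA A]; norm_num)]
      simp
    have hFk : F.filter (fun A => A.card = 0) = F :=
      Finset.filter_true_of_mem fun A _ => hA A
    rw [hμ, hFk]
    have : (0:ℝ) ≤ (F.card : ℝ) := Nat.cast_nonneg _
    simp only [Nat.choose_self, Nat.cast_one, div_one]
    nlinarith
  · have hn' : (0:ℝ) < n := by exact_mod_cast hn
    have hs0 : 0 ≤ Real.sqrt (2 * n * Real.log (1 / δ)) := Real.sqrt_nonneg _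
    have hp0 : 0 ≤ p := le_trans (by positivity) hp
    have hfrac0 : (0:ℝ) ≤ ((F.filter (fun A => A.card = k)).card : ℝ) / (n.choose k) := by
      positivity
    rcases le_or_gt (1:ℝ) δ with hδ1 | hδ1
    · -- δ ≥ 1 : trivial
      have hμ0 : 0 ≤ biasedMeasure p n F := by
        rw [biasedMeasure]
        apply Finset.sum_nonneg
        intro A _
        have : (0:ℝ) ≤ 1 - p := by linarith
        positivity
      nlinarith
    · -- main case
      set t := Real.sqrt (2 * n * Real.log (1 / δ)) with htdef
      have hlog : 0 ≤ Real.log (1 / δ) := Real.log_nonneg (one_le_one_div hδ hδ1.le)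
      have hkt : (k : ℝ) + t ≤ n * p := by
        rw [div_le_iff₀ hn'] at hp
        linarith [hp]
      have hch := chernoff n k p t hn hp0 hp1 hs0 hkt
      have ht2 : t ^ 2 = 2 * n * Real.log (1 / δ) := Real.sq_sqrt (by positivity)
      have hexp : Real.exp (-(t ^ 2) / (2 * n)) = δ := by
        rw [ht2, show -(2 * (n:ℝ) * Real.log (1 / δ)) / (2 * n) = -Real.log (1/δ) by
          rw [div_eq_iff (by positivity : (2*(n:ℝ)) ≠ 0)]; ring]
        rw [one_div, Real.log_inv, neg_neg, Real.exp_log hδ]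
      have hsum1 : ∑ j ∈ range (n + 1), (n.choose j : ℝ) * p ^ j * (1 - p) ^ (n - j) = 1 := by
        have h := add_pow p (1 - p) n
        simp only [add_sub_cancel, one_pow] at h
        rw [Finset.sum_congr rfl (g := fun m => p ^ m * (1 - p) ^ (n - m) * (n.choose m : ℝ))
          (fun j _ => by ring)]
        exact h.symm
      have hsplit : ∑ j ∈ range k, (n.choose j : ℝ) * p ^ j * (1 - p) ^ (n - j)
          + ∑ j ∈ Ico k (n + 1), (n.choose j : ℝ) * p ^ j * (1 - p) ^ (n - j) = 1 := by
        have h := Finset.sum_range_add_sum_Ico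
          (fun j => (n.choose j : ℝ) * p ^ j * (1 - p) ^ (n - j)) (Nat.le_succ_of_le hk)
        rw [hsum1] at h
        exact h
      have hIco : 1 - δ ≤ ∑ j ∈ Ico k (n + 1), (n.choose j : ℝ) * p ^ j * (1 - p) ^ (n - j) := by
        have : ∑ j ∈ range k, (n.choose j : ℝ) * p ^ j * (1 - p) ^ (n - j) ≤ δ := by
          rw [← hexp]; exact hch
        linarith
      calc (1 - δ) * (((F.filter (fun A => A.card = k)).card : ℝ) / (n.choose k))
          ≤ (∑ j ∈ Ico k (n + 1), (n.choose j : ℝ) * p ^ j * (1 - p) ^ (n - j)) *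
              (((F.filter (fun A => A.card = k)).card : ℝ) / (n.choose k)) :=
            mul_le_mul_of_nonneg_right hIco hfrac0
        _ ≤ biasedMeasure p n F := counting n k p hp0 hp1 hk F hinc
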